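/- Let σ_1 ≥ ... ≥ σ_N ≥ 0, k ≤ N, a_1,...,a_N ∈ [0,1] with Σ a_i = k and Σ_{i=1}^k σ_i² ≤ Σ_{i=1}^N σ_i² a_i + ε σ_k², with σ_k > 0. Let 0 < η ≤ 1 and L = max{i : σ_i ≥ σ_k(1+η)}. Then Σ_{i=1}^L (1 − a_i) ≤ ε/(2η+η²) ≤ ε/η. -/

import Mathlib

theorem stmt_12 (N k L : ℕ) (σ a : ℕ → ℝ) (ε η : ℝ)
    (hk1 : 1 ≤ k) (hkN : k ≤ N)
    (hmono : ∀ i j, 1 ≤ i → i ≤ j → j ≤ N → σ j ≤ σ i)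
    (hnn : ∀ i ∈ Finset.Icc 1 N, 0 ≤ σ i)
    (ha : ∀ i ∈ Finset.Icc 1 N, a i ∈ Set.Icc (0 : ℝ) 1)
    (hsum : ∑ i ∈ Finset.Icc 1 N, a i = (k : ℝ))
    (hmain : ∑ i ∈ Finset.Icc 1 k, σ i ^ 2 ≤ ∑ i ∈ Finset.Icc 1 N, σ i ^ 2 * a i + ε * σ k ^ 2)
    (hε : 0 ≤ ε) (hη0 : 0 < η) (hη1 : η ≤ 1) (hσk : 0 < σ k)
    (hLN : L ≤ N)
    (hL : ∀ i ∈ Finset.Icc 1 N, (σ k * (1 + η) ≤ σ i ↔ i ≤ L)) :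
    (∑ i ∈ Finset.Icc 1 L, (1 - a i) ≤ ε / (2 * η + η ^ 2)) ∧
    ε / (2 * η + η ^ 2) ≤ ε / η := by
  have hη2 : 0 < 2 * η + η ^ 2 := by nlinarith
  have hkIcc : k ∈ Finset.Icc 1 N := Finset.mem_Icc.mpr ⟨hk1, hkN⟩
  have hLk : L < k := by
    by_contra h
    push_neg at h
    have := (hL k hkIcc).mpr h
    nlinarith
  have hc : 0 < σ k ^ 2 := by positivity
  have e : ∀ n : ℕ, Finset.Icc 1 n = Finset.Ioc 0 n := fun n => Finset.Icc_add_one_left_eq_Ioc 0 n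
  have split2 : ∀ f : ℕ → ℝ, ∑ i ∈ Finset.Ioc 0 L, f i + ∑ i ∈ Finset.Ioc L k, f i
      = ∑ i ∈ Finset.Ioc 0 k, f i :=
    fun f => Finset.sum_Ioc_consecutive f (Nat.zero_le L) hLk.le
  have split1 : ∀ f : ℕ → ℝ, ∑ i ∈ Finset.Ioc 0 k, f i + ∑ i ∈ Finset.Ioc k N, f i
      = ∑ i ∈ Finset.Ioc 0 N, f i :=
    fun f => Finset.sum_Ioc_consecutive f (Nat.zero_le k) hkN
  -- membership helpers
  have memN : ∀ i ∈ Finset.Ioc 0 N, i ∈ Finset.Icc 1 N := by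
    intro i hi; rw [e]; exact hi
  have memL : ∀ i ∈ Finset.Ioc 0 L, i ∈ Finset.Icc 1 N := by
    intro i hi
    rw [Finset.mem_Ioc] at hi
    exact Finset.mem_Icc.mpr ⟨hi.1, hi.2.trans hLN⟩
  have memLk : ∀ i ∈ Finset.Ioc L k, i ∈ Finset.Icc 1 N := by
    intro i hi
    rw [Finset.mem_Ioc] at hi
    exact Finset.mem_Icc.mpr ⟨Nat.one_le_of_lt (Nat.lt_of_le_of_lt (Nat.zero_le L) hi.1),
      hi.2.trans hkN⟩
  have memk : ∀ i ∈ Finset.Ioc 0 k, i ∈ Finset.Icc 1 N := by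
    intro i hi
    rw [Finset.mem_Ioc] at hi
    exact Finset.mem_Icc.mpr ⟨hi.1, hi.2.trans hkN⟩
  have memkN : ∀ i ∈ Finset.Ioc k N, i ∈ Finset.Icc 1 N := by
    intro i hi
    rw [Finset.mem_Ioc] at hi
    exact Finset.mem_Icc.mpr ⟨hk1.trans hi.1.le, hi.2⟩
  -- bound B1
  have B1 : (σ k ^ 2 * (1 + η) ^ 2) * ∑ i ∈ Finset.Ioc 0 L, (1 - a i)
      ≤ ∑ i ∈ Finset.Ioc 0 L, σ i ^ 2 * (1 - a i) := by
    rw [Finset.mul_sum]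
    apply Finset.sum_le_sum
    intro i hi
    have hiN := memL i hi
    have h1 : σ k * (1 + η) ≤ σ i := (hL i hiN).mpr (Finset.mem_Ioc.mp hi).2
    have h2 := (ha i hiN).2
    have h3 : 0 ≤ σ k * (1 + η) := by positivity
    have h4 : (σ k * (1 + η)) ^ 2 ≤ σ i ^ 2 := pow_le_pow_left₀ h3 h1 2
    nlinarith [mul_le_mul_of_nonneg_right h4 (sub_nonneg.mpr h2)]
  have B2 : σ k ^ 2 * ∑ i ∈ Finset.Ioc L k, (1 - a i)
      ≤ ∑ i ∈ Finset.Ioc L k, σ i ^ 2 * (1 - a i) := by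
    rw [Finset.mul_sum]
    apply Finset.sum_le_sum
    intro i hi
    have hiN := memLk i hi
    have hi' := Finset.mem_Ioc.mp hi
    have h1 : σ k ≤ σ i := hmono i k (Finset.mem_Icc.mp hiN).1 hi'.2 hkN
    have h2 := (ha i hiN).2
    have h0 := hnn i hiN
    have h4 : σ k ^ 2 ≤ σ i ^ 2 := pow_le_pow_left₀ hσk.le h1 2
    nlinarith [mul_le_mul_of_nonneg_right h4 (sub_nonneg.mpr h2)]
  have B3 : ∑ i ∈ Finset.Ioc k N, σ i ^ 2 * a i
      ≤ σ k ^ 2 * ∑ i ∈ Finset.Ioc k N, a i := by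
    rw [Finset.mul_sum]
    apply Finset.sum_le_sum
    intro i hi
    have hiN := memkN i hi
    have hi' := Finset.mem_Ioc.mp hi
    have h1 : σ i ≤ σ k := hmono k i hk1 hi'.1.le hi'.2
    have h2 := (ha i hiN).1
    have h0 := hnn i hiN
    have h4 : σ i ^ 2 ≤ σ k ^ 2 := pow_le_pow_left₀ h0 h1 2
    exact mul_le_mul_of_nonneg_right h4 h2
  -- rewrite hmain
  rw [e] at hsum
  rw [e, e] at hmain
  rw [e]
  have lin1 : ∑ i ∈ Finset.Ioc 0 k, σ i ^ 2 * (1 - a i)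
      = ∑ i ∈ Finset.Ioc 0 k, σ i ^ 2 - ∑ i ∈ Finset.Ioc 0 k, σ i ^ 2 * a i := by
    rw [← Finset.sum_sub_distrib]
    exact Finset.sum_congr rfl fun i _ => by ring
  have key : ∑ i ∈ Finset.Ioc 0 k, σ i ^ 2 * (1 - a i)
      ≤ ∑ i ∈ Finset.Ioc k N, σ i ^ 2 * a i + ε * σ k ^ 2 := by
    have := split1 (fun i => σ i ^ 2 * a i)
    linarith [lin1]
  -- balance
  have card1 : ∑ i ∈ Finset.Ioc 0 k, (1 : ℝ) = (k : ℝ) := by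
    simp [Nat.card_Ioc]
  have bal : ∑ i ∈ Finset.Ioc 0 L, (1 - a i) + ∑ i ∈ Finset.Ioc L k, (1 - a i)
      = ∑ i ∈ Finset.Ioc k N, a i := by
    have h1 := split2 (fun i => (1 : ℝ) - a i)
    have h2 := split1 (fun i => a i)
    have h3 : ∑ i ∈ Finset.Ioc 0 k, (1 - a i)
        = ∑ i ∈ Finset.Ioc 0 k, (1 : ℝ) - ∑ i ∈ Finset.Ioc 0 k, a i := by
      rw [← Finset.sum_sub_distrib]
    rw [h1, h3, card1]
    linarith
  have hfin := split2 (fun i => σ i ^ 2 * (1 - a i))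
  constructor
  · rw [le_div_iff₀ hη2]
    nlinarith [B1, B2, B3, key, bal, hfin, hc]
  · rw [div_le_div_iff₀ hη2 hη0]
    nlinarith [mul_nonneg hε (mul_nonneg hη0.le hη0.le)]
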